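/- Let G be a finite abelian group, let A ⊆ G be a Sidon set, and set δ = √|G| − |A|. Then for all subsets B, B′ ⊆ G with B′ nonempty, |A ∩ B| ≤ |A|·|B + B′|/|G| + (1 + max(0,δ)·|B′|/|G|) · √(|B + B′|/|B′|) · |G|^{1/4}, where B + B′ = {b + b′ : b ∈ B, b′ ∈ B′} is the sumset. -/

import Mathlib

open scoped Pointwise
open Finset

lemma sidon_aux1 (a s r : ℝ) (hs : 1 ≤ s) (hra : r ≤ a) (har : a ≤ r + 1) (hr : 0 < r) :
    a * s + s * s - s - (a * s) ^ 2 / (r * r) ≤ s * (r * 1 ^ 2) := by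
  have h2 : (0:ℝ) < r * r := by positivity
  rw [sub_le_iff_le_add, ← sub_le_iff_le_add', le_div_iff₀ h2]
  nlinarith [mul_nonneg (mul_nonneg (by linarith : (0:ℝ) ≤ s) h2.le)
      (by linarith : (0:ℝ) ≤ r + 1 - a),
    mul_nonneg (mul_nonneg (mul_nonneg (by linarith : (0:ℝ) ≤ s) (by linarith : (0:ℝ) ≤ s))
      (by linarith : (0:ℝ) ≤ a - r)) (by linarith : (0:ℝ) ≤ a + r)]

lemma sidon_aux2 (a s r : ℝ) (ha0 : 0 ≤ a) (hs : 1 ≤ s) (hd : 0 ≤ r - a) (hr : 0 < r) :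
    a * s + s * s - s - (a * s) ^ 2 / (r * r)
      ≤ s * (r * ((r * r + (r - a) * s) / (r * r)) ^ 2) := by
  have h2 : (0:ℝ) < r * r := by positivity
  have hs0 : (0:ℝ) ≤ s := by linarith
  have key : ((a * s + s * s - s) * (r * r) - (a * s) ^ 2) * (r * r)
      ≤ s * r * (r * r + (r - a) * s) ^ 2 := by
    nlinarith [mul_nonneg (mul_nonneg hs0 (sq_nonneg (r * r))) hd,
      mul_nonneg hs0 (sq_nonneg (r * r)),
      mul_nonneg (mul_nonneg (mul_nonneg hs0 hs0) (sq_nonneg (r - a))) h2.le,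
      mul_nonneg (mul_nonneg (mul_nonneg (mul_nonneg hs0 hs0) hs0) (sq_nonneg (r - a))) hr.le]
  rw [show s * (r * ((r * r + (r - a) * s) / (r * r)) ^ 2)
      = s * r * (r * r + (r - a) * s) ^ 2 / ((r * r) * (r * r)) by field_simp]
  rw [show a * s + s * s - s - (a * s) ^ 2 / (r * r)
      = ((a * s + s * s - s) * (r * r) - (a * s) ^ 2) / (r * r) by field_simp]
  rw [div_le_div_iff₀ h2 (by positivity)]
  calc ((a * s + s * s - s) * (r * r) - (a * s) ^ 2) * (r * r * (r * r))
      = (((a * s + s * s - s) * (r * r) - (a * s) ^ 2) * (r * r)) * (r * r) := by ring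
    _ ≤ (s * r * (r * r + (r - a) * s) ^ 2) * (r * r) :=
        mul_le_mul_of_nonneg_right key h2.le


theorem sidon_cap_bound {G : Type*} [AddCommGroup G] [Fintype G] [DecidableEq G]
    (A : Finset G)
    (hA : ∀ a ∈ A, ∀ b ∈ A, ∀ c ∈ A, ∀ d ∈ A,
      a - b = c - d → a - b ≠ 0 → a = c ∧ b = d)
    (B B' : Finset G) (hB' : B'.Nonempty) :
    ((A ∩ B).card : ℝ)
      ≤ (A.card : ℝ) * ((B + B').card : ℝ) / (Fintype.card G : ℝ)
        + (1 + max 0 (Real.sqrt (Fintype.card G) - (A.card : ℝ)) * (B'.card : ℝ)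
              / (Fintype.card G : ℝ))
          * Real.sqrt (((B + B').card : ℝ) / (B'.card : ℝ))
          * (Fintype.card G : ℝ) ^ ((1 : ℝ) / 4) := by
  classical
  set N : G → ℕ := fun x => ((A ×ˢ B').filter (fun p => p.1 + p.2 = x)).card with hN
  -- first moment
  have hNsum : ∑ x : G, N x = A.card * B'.card := by
    rw [← Finset.card_product]
    exact (Finset.card_eq_sum_card_fiberwise (f := fun p : G × G => p.1 + p.2)
      (t := Finset.univ) (fun x _ => Finset.mem_univ _)).symm
  -- second moment
  have hNsq : (∑ x : G, N x * N x) + B'.card ≤ A.card * B'.card + B'.card * B'.card := by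
    set P : Finset ((G × G) × (G × G)) := ((A ×ˢ B') ×ˢ (A ×ˢ B')).filter
        (fun q => q.1.1 + q.1.2 = q.2.1 + q.2.2) with hP
    have hPcard : ∑ x : G, N x * N x = P.card := by
      rw [Finset.card_eq_sum_card_fiberwise (f := fun q : (G × G) × (G × G) => q.1.1 + q.1.2)
        (t := Finset.univ) (fun x _ => Finset.mem_univ _)]
      refine Finset.sum_congr rfl fun x _ => ?_
      rw [hN, ← Finset.card_product]
      congr 1
      ext q
      simp only [P, Finset.mem_filter, Finset.mem_product]
      constructor
      · rintro ⟨⟨h1, hx1⟩, h2, hx2⟩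
        exact ⟨⟨⟨h1, h2⟩, hx1.trans hx2.symm⟩, hx1⟩
      · rintro ⟨⟨hm, hsum⟩, hx⟩
        exact ⟨⟨hm.1, hx⟩, hm.2, hsum.symm.trans hx⟩
    have hdiag2 : ∀ q ∈ P.filter (fun q => q.1.1 = q.2.1), q.2 = q.1 := by
      intro q hq
      simp only [P, Finset.mem_filter] at hq
      obtain ⟨⟨_, hsum⟩, heq⟩ := hq
      have h22 : q.1.2 = q.2.2 := by
        rw [heq] at hsum
        exact add_left_cancel hsum
      exact Prod.ext heq.symm h22.symm
    have hdiag : (P.filter (fun q => q.1.1 = q.2.1)).card ≤ A.card * B'.card := by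
      rw [← Finset.card_product]
      apply Finset.card_le_card_of_injOn (fun q => q.1)
      · intro q hq
        have hq' := Finset.mem_of_mem_filter _ hq
        simp only [P, Finset.mem_filter, Finset.mem_product] at hq'
        exact Finset.mem_product.mpr hq'.1.1
      · intro q hq q' hq' h
        have e1 := hdiag2 q (by simpa using hq)
        have e2 := hdiag2 q' (by simpa using hq')
        apply Prod.ext h
        rw [e1, e2]; exact h
    have hoff : (P.filter (fun q => ¬ q.1.1 = q.2.1)).card + B'.card ≤ B'.card * B'.card := by
      have hDeq : ((B' ×ˢ B').filter (fun r : G × G => r.1 = r.2)).card = B'.card := by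
        rw [show (B' ×ˢ B').filter (fun r : G × G => r.1 = r.2) = B'.image (fun b => (b, b)) by
          ext r
          simp only [Finset.mem_filter, Finset.mem_product, Finset.mem_image]
          constructor
          · rintro ⟨⟨h1, h2⟩, h3⟩; exact ⟨r.1, h1, Prod.ext rfl h3⟩
          · rintro ⟨b, hb, rfl⟩; exact ⟨⟨hb, hb⟩, rfl⟩]
        exact Finset.card_image_of_injective _ (fun a b h => (Prod.mk.injEq _ _ _ _ ▸ h).1)
      have hDsplit := Finset.card_filter_add_card_filter_not
        (s := B' ×ˢ B') (p := fun r : G × G => r.1 = r.2)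
      rw [Finset.card_product] at hDsplit
      have hle : (P.filter (fun q => ¬ q.1.1 = q.2.1)).card
          ≤ ((B' ×ˢ B').filter (fun r : G × G => ¬ r.1 = r.2)).card := by
        apply Finset.card_le_card_of_injOn (fun q => (q.1.2, q.2.2))
        · intro q hq
          simp only [P, Finset.mem_coe, Finset.mem_filter, Finset.mem_product] at hq ⊢
          obtain ⟨⟨⟨⟨_, h12⟩, _, h22⟩, hsum⟩, hne⟩ := hq
          refine ⟨⟨h12, h22⟩, fun hc => hne ?_⟩
          have hc' : q.1.2 = q.2.2 := hc
          rw [hc'] at hsum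
          exact add_right_cancel hsum
        · intro q hq q' hq' h
          simp only [Finset.coe_filter, Set.mem_setOf_eq, P, Finset.mem_filter,
            Finset.mem_product] at hq hq'
          obtain ⟨⟨⟨⟨hq11, _⟩, hq21, _⟩, hsum⟩, hne⟩ := hq
          obtain ⟨⟨⟨⟨hq11', _⟩, hq21', _⟩, hsum'⟩, hne'⟩ := hq'
          simp only [Prod.mk.injEq] at h
          obtain ⟨h1, h2⟩ := h
          have hd : q.1.1 - q.2.1 = q'.1.1 - q'.2.1 := by
            have e1 : q.1.1 - q.2.1 = q.2.2 - q.1.2 := by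
              rw [sub_eq_sub_iff_add_eq_add, add_comm q.2.2]
              exact hsum
            have e2 : q'.1.1 - q'.2.1 = q'.2.2 - q'.1.2 := by
              rw [sub_eq_sub_iff_add_eq_add, add_comm q'.2.2]
              exact hsum'
            rw [e1, e2, h1, h2]
          have hnz : q.1.1 - q.2.1 ≠ 0 := sub_ne_zero.mpr hne
          obtain ⟨e1, e2⟩ := hA _ hq11 _ hq21 _ hq11' _ hq21' hd hnz
          exact Prod.ext (Prod.ext e1 h1) (Prod.ext e2 h2)
      omega
    have hsplit : (P.filter (fun q => q.1.1 = q.2.1)).card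
        + (P.filter (fun q => ¬ q.1.1 = q.2.1)).card = P.card :=
      Finset.card_filter_add_card_filter_not _
    rw [hPcard, ← hsplit, add_assoc]
    exact Nat.add_le_add hdiag hoff
  -- restricted sum bound
  have hKs : (A ∩ B).card * B'.card ≤ ∑ x ∈ B + B', N x := by
    have hsub : ((A ∩ B) ×ˢ B') ⊆ (A ×ˢ B').filter (fun p => p.1 + p.2 ∈ B + B') := by
      intro p hp
      simp only [Finset.mem_product, Finset.mem_inter] at hp
      exact Finset.mem_filter.mpr ⟨Finset.mem_product.mpr ⟨hp.1.1, hp.2⟩,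
        Finset.add_mem_add hp.1.2 hp.2⟩
    calc (A ∩ B).card * B'.card = ((A ∩ B) ×ˢ B').card := (Finset.card_product _ _).symm
      _ ≤ ((A ×ˢ B').filter (fun p => p.1 + p.2 ∈ B + B')).card := Finset.card_le_card hsub
      _ = ∑ x ∈ B + B', N x := by
          rw [Finset.card_eq_sum_card_fiberwise (f := fun p : G × G => p.1 + p.2) (t := B + B')
            (s := (A ×ˢ B').filter (fun p => p.1 + p.2 ∈ B + B'))
            (fun p hp => (Finset.mem_filter.mp (Finset.mem_coe.mp hp)).2)]
          refine Finset.sum_congr rfl fun x hx => ?_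
          rw [hN]
          congr 1
          ext p
          simp only [Finset.mem_filter]
          constructor
          · rintro ⟨⟨hm, _⟩, hx1⟩; exact ⟨hm, hx1⟩
          · rintro ⟨hm, hx1⟩; exact ⟨⟨hm, by rw [hx1]; exact hx⟩, hx1⟩
  -- Sidon size bound
  have hsize : A.card * A.card ≤ Fintype.card G + A.card := by
    have h1 : ((A ×ˢ A).filter (fun p : G × G => ¬ p.1 = p.2)).card ≤ Fintype.card G := by
      rw [← Finset.card_univ]
      apply Finset.card_le_card_of_injOn (fun p => p.1 - p.2) (fun p _ => Finset.mem_univ _)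
      intro p hp q hq h
      simp only [Finset.coe_filter, Set.mem_setOf_eq, Finset.mem_filter,
        Finset.mem_product] at hp hq
      obtain ⟨⟨hp1, hp2⟩, hpne⟩ := hp
      obtain ⟨⟨hq1, hq2⟩, hqne⟩ := hq
      obtain ⟨e1, e2⟩ := hA _ hp1 _ hp2 _ hq1 _ hq2 h (sub_ne_zero.mpr hpne)
      exact Prod.ext e1 e2
    have h2 : ((A ×ˢ A).filter (fun p : G × G => p.1 = p.2)).card = A.card := by
      rw [show (A ×ˢ A).filter (fun p : G × G => p.1 = p.2) = A.image (fun b => (b, b)) by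
        ext r
        simp only [Finset.mem_filter, Finset.mem_product, Finset.mem_image]
        constructor
        · rintro ⟨⟨h1, h2⟩, h3⟩; exact ⟨r.1, h1, Prod.ext rfl h3⟩
        · rintro ⟨b, hb, rfl⟩; exact ⟨⟨hb, hb⟩, rfl⟩]
      exact Finset.card_image_of_injective _ (fun a b h => (Prod.mk.injEq _ _ _ _ ▸ h).1)
    have h3 := Finset.card_filter_add_card_filter_not
      (s := A ×ˢ A) (p := fun p : G × G => p.1 = p.2)
    rw [Finset.card_product] at h3
    omega
  -- real setup
  have hn1 : 0 < Fintype.card G := Fintype.card_pos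
  set nR : ℝ := (Fintype.card G : ℝ) with hnRdef
  set aR : ℝ := (A.card : ℝ) with haRdef
  set sR : ℝ := (B'.card : ℝ) with hsRdef
  set SR : ℝ := ((B + B').card : ℝ) with hSRdef
  set kR : ℝ := ((A ∩ B).card : ℝ) with hkRdef
  set rn : ℝ := Real.sqrt nR with hrndef
  set cR : ℝ := 1 + max 0 (rn - aR) * sR / nR with hcRdef
  have hnRpos : (0:ℝ) < nR := by rw [hnRdef]; exact_mod_cast hn1
  have hsR1 : (1:ℝ) ≤ sR := by rw [hsRdef]; exact_mod_cast Finset.one_le_card.mpr hB'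
  have hsRpos : (0:ℝ) < sR := lt_of_lt_of_le one_pos hsR1
  have hSR0 : (0:ℝ) ≤ SR := by rw [hSRdef]; positivity
  have haR0 : (0:ℝ) ≤ aR := by rw [haRdef]; positivity
  have hrn0 : (0:ℝ) ≤ rn := Real.sqrt_nonneg _
  have hrnn : rn * rn = nR := Real.mul_self_sqrt hnRpos.le
  have hcR0 : (0:ℝ) ≤ cR := by
    have h0 : (0:ℝ) ≤ max 0 (rn - aR) := le_max_left _ _
    have : (0:ℝ) ≤ max 0 (rn - aR) * sR / nR := by positivity
    rw [hcRdef]; linarith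
  have haRrn : aR ≤ rn + 1 := by
    have hs : aR * aR ≤ nR + aR := by
      rw [haRdef, hnRdef]; exact_mod_cast hsize
    nlinarith [hrnn, hrn0, haR0]
  -- sums over ℝ
  have hNsumR : ∑ x : G, (N x : ℝ) = aR * sR := by
    rw [haRdef, hsRdef]; exact_mod_cast hNsum
  have hNsqR : (∑ x : G, (N x : ℝ) * (N x : ℝ)) + sR ≤ aR * sR + sR * sR := by
    rw [haRdef, hsRdef]; exact_mod_cast hNsq
  set g : G → ℝ := fun x => (N x : ℝ) - aR * sR / nR with hg
  set E : ℝ := ∑ x : G, g x ^ 2 with hE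
  have hEeq : E = (∑ x : G, (N x : ℝ) * (N x : ℝ)) - (aR * sR) ^ 2 / nR := by
    have expand : ∀ x : G, g x ^ 2
        = (N x : ℝ) * (N x : ℝ) - (2 * (aR * sR) / nR) * (N x : ℝ) + (aR * sR / nR) ^ 2 := by
      intro x; rw [hg]; ring
    calc E = ∑ x : G, ((N x : ℝ) * (N x : ℝ) - (2 * (aR * sR) / nR) * (N x : ℝ)
          + (aR * sR / nR) ^ 2) := Finset.sum_congr rfl fun x _ => expand x
      _ = (∑ x : G, (N x : ℝ) * (N x : ℝ)) - (2 * (aR * sR) / nR) * (∑ x : G, (N x : ℝ))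
          + (Fintype.card G : ℝ) * (aR * sR / nR) ^ 2 := by
          rw [Finset.sum_add_distrib, Finset.sum_sub_distrib, ← Finset.mul_sum,
            Finset.sum_const, Finset.card_univ, nsmul_eq_mul]
      _ = (∑ x : G, (N x : ℝ) * (N x : ℝ)) - (aR * sR) ^ 2 / nR := by
          rw [← hnRdef, hNsumR]; field_simp; ring
  have hE2 : E ≤ aR * sR + sR * sR - sR - (aR * sR) ^ 2 / nR := by
    rw [hEeq]; linarith
  -- key bound on E
  have hEbound : E ≤ sR * (rn * cR ^ 2) := by
    rcases le_or_gt rn aR with hcase | hcase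
    · have hmax : max 0 (rn - aR) = 0 := max_eq_left (by linarith)
      have hc1 : cR = 1 := by rw [hcRdef, hmax]; ring
      rw [hc1]
      have hrnpos : (0:ℝ) < rn := by rw [hrndef]; exact Real.sqrt_pos.mpr hnRpos
      have h := sidon_aux1 aR sR rn hsR1 hcase haRrn hrnpos
      rw [hrnn] at h
      exact hE2.trans h
    · have hd : (0:ℝ) ≤ rn - aR := by linarith
      have hmax : max 0 (rn - aR) = rn - aR := max_eq_right hd
      have hceq : cR = (nR + (rn - aR) * sR) / nR := by
        rw [hcRdef, hmax]; field_simp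
      rw [hceq]
      have hrnpos : (0:ℝ) < rn := by rw [hrndef]; exact Real.sqrt_pos.mpr hnRpos
      have h := sidon_aux2 aR sR rn haR0 hsR1 hd hrnpos
      rw [hrnn] at h
      exact hE2.trans h
  -- Cauchy–Schwarz step
  have hML : kR * sR ≤ SR * (aR * sR / nR) + Real.sqrt (SR * E) := by
    have h0 : kR * sR ≤ ∑ x ∈ B + B', (N x : ℝ) := by
      rw [hkRdef, hsRdef]; exact_mod_cast hKs
    have h1 : ∑ x ∈ B + B', (N x : ℝ) = SR * (aR * sR / nR) + ∑ x ∈ B + B', g x := by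
      rw [hg]
      rw [Finset.sum_sub_distrib, Finset.sum_const, nsmul_eq_mul, ← hSRdef]
      ring
    have hCS1 : (∑ x ∈ B + B', g x) ^ 2 ≤ SR * ∑ x ∈ B + B', g x ^ 2 := by
      have h := Finset.sum_mul_sq_le_sq_mul_sq (B + B') (fun _ => (1:ℝ)) g
      simp only [one_pow, one_mul, Finset.sum_const, nsmul_eq_mul, mul_one] at h
      rw [hSRdef]
      exact h
    have h2 : ∑ x ∈ B + B', g x ≤ Real.sqrt (SR * E) := by
      calc ∑ x ∈ B + B', g x ≤ |∑ x ∈ B + B', g x| := le_abs_self _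
        _ = Real.sqrt ((∑ x ∈ B + B', g x) ^ 2) := (Real.sqrt_sq_eq_abs _).symm
        _ ≤ Real.sqrt (SR * E) := by
            apply Real.sqrt_le_sqrt
            refine hCS1.trans ?_
            have hsub : ∑ x ∈ B + B', g x ^ 2 ≤ E := by
              rw [hE]
              exact Finset.sum_le_sum_of_subset_of_nonneg (Finset.subset_univ _)
                (fun i _ _ => sq_nonneg _)
            exact mul_le_mul_of_nonneg_left hsub hSR0
    linarith
  -- convert the error term
  have h14 : Real.sqrt rn = nR ^ ((1:ℝ) / 4) := by
    rw [hrndef, Real.sqrt_eq_rpow, Real.sqrt_eq_rpow, ← Real.rpow_mul hnRpos.le]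
    norm_num
  have hSdiv0 : (0:ℝ) ≤ SR / sR := div_nonneg hSR0 hsRpos.le
  have hSS : Real.sqrt (SR * E) ≤ cR * Real.sqrt (SR / sR) * nR ^ ((1:ℝ) / 4) * sR := by
    have hstep : Real.sqrt (SR * E) ≤ Real.sqrt ((SR / sR) * rn * cR ^ 2 * sR ^ 2) := by
      apply Real.sqrt_le_sqrt
      calc SR * E ≤ SR * (sR * (rn * cR ^ 2)) := mul_le_mul_of_nonneg_left hEbound hSR0
        _ = (SR / sR) * rn * cR ^ 2 * sR ^ 2 := by field_simp
    refine hstep.trans (le_of_eq ?_)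
    rw [Real.sqrt_mul (mul_nonneg (mul_nonneg hSdiv0 hrn0) (sq_nonneg cR)) (sR ^ 2),
      Real.sqrt_mul (mul_nonneg hSdiv0 hrn0) (cR ^ 2),
      Real.sqrt_mul hSdiv0 rn,
      Real.sqrt_sq hcR0, Real.sqrt_sq hsRpos.le, h14]
    ring
  have hfin : kR * sR ≤ (aR * SR / nR + cR * Real.sqrt (SR / sR) * nR ^ ((1:ℝ) / 4)) * sR := by
    calc kR * sR ≤ SR * (aR * sR / nR) + Real.sqrt (SR * E) := hML
      _ ≤ SR * (aR * sR / nR) + cR * Real.sqrt (SR / sR) * nR ^ ((1:ℝ) / 4) * sR := by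
          linarith [hSS]
      _ = (aR * SR / nR + cR * Real.sqrt (SR / sR) * nR ^ ((1:ℝ) / 4)) * sR := by ring
  exact le_of_mul_le_mul_right hfin hsRpos
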